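/- Let A be an m×m real symmetric positive semidefinite matrix with Moore–Penrose inverse A†, let α be a real scalar with ‖A A† − α A²‖ < 1 in spectral norm, and define the Newton–Raphson iterates A₀ = α A, A_{k+1} = 2 A_k − A_k A A_k. Then the sequence ‖A_k − A†‖ is monotonically nonincreasing in k and converges to 0. -/

import Mathlib

open Matrix Filter

/-- The spectral norm (ℓ²-operator norm) of a real square matrix. -/
noncomputable def specNorm {m : ℕ} (M : Matrix (Fin m) (Fin m) ℝ) : ℝ :=
  ‖Matrix.toEuclideanCLM (𝕜 := ℝ) M‖

/-- `Ad` is the Moore–Penrose inverse of `A`: the Penrose equations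
`A Ad A = A`, `Ad A Ad = Ad`, `(A Ad)ᵀ = A Ad`, `(Ad A)ᵀ = Ad A`. -/
def IsMoorePenroseInv {m n : ℕ} (A : Matrix (Fin m) (Fin n) ℝ)
    (Ad : Matrix (Fin n) (Fin m) ℝ) : Prop :=
  A * Ad * A = A ∧ Ad * A * Ad = Ad ∧ (A * Ad)ᵀ = A * Ad ∧ (Ad * A)ᵀ = Ad * A

lemma specNorm_nonneg {m : ℕ} (M : Matrix (Fin m) (Fin m) ℝ) : 0 ≤ specNorm M :=
  norm_nonneg _

lemma specNorm_mul_le {m : ℕ} (M P : Matrix (Fin m) (Fin m) ℝ) :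
    specNorm (M * P) ≤ specNorm M * specNorm P := by
  unfold specNorm
  rw [_root_.map_mul]
  exact norm_mul_le _ _

lemma specNorm_neg {m : ℕ} (M : Matrix (Fin m) (Fin m) ℝ) :
    specNorm (-M) = specNorm M := by
  unfold specNorm
  rw [map_neg, norm_neg]

lemma mp_unique {m n : ℕ} (A : Matrix (Fin m) (Fin n) ℝ)
    (B C : Matrix (Fin n) (Fin m) ℝ)
    (hB : IsMoorePenroseInv A B) (hC : IsMoorePenroseInv A C) : B = C := by
  obtain ⟨hB1, hB2, hB3, hB4⟩ := hB
  obtain ⟨hC1, hC2, hC3, hC4⟩ := hC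
  have hAB : A * B = A * C := by
    calc A * B = (A * B)ᵀ := hB3.symm
    _ = Bᵀ * Aᵀ := transpose_mul _ _
    _ = Bᵀ * (A * C * A)ᵀ := by rw [hC1]
    _ = Bᵀ * (Aᵀ * (A * C)ᵀ) := by rw [transpose_mul (A * C) A]
    _ = (Bᵀ * Aᵀ) * (A * C)ᵀ := (Matrix.mul_assoc _ _ _).symm
    _ = (A * B)ᵀ * (A * C)ᵀ := by rw [← transpose_mul A B]
    _ = (A * B) * (A * C) := by rw [hB3, hC3]
    _ = (A * B * A) * C := (Matrix.mul_assoc _ _ _).symm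
    _ = A * C := by rw [hB1]
  have hBA : B * A = C * A := by
    calc B * A = (B * A)ᵀ := hB4.symm
    _ = Aᵀ * Bᵀ := transpose_mul _ _
    _ = (A * C * A)ᵀ * Bᵀ := by rw [hC1]
    _ = (Aᵀ * (Cᵀ * Aᵀ)) * Bᵀ := by rw [transpose_mul (A * C) A, transpose_mul A C]
    _ = (Aᵀ * Cᵀ) * (Aᵀ * Bᵀ) := by rw [← Matrix.mul_assoc, Matrix.mul_assoc]
    _ = (C * A)ᵀ * (B * A)ᵀ := by rw [← transpose_mul C A, ← transpose_mul B A]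
    _ = (C * A) * (B * A) := by rw [hC4, hB4]
    _ = C * (A * B * A) := by rw [Matrix.mul_assoc, ← Matrix.mul_assoc A B A]
    _ = C * A := by rw [hB1]
  calc B = B * A * B := hB2.symm
  _ = B * (A * B) := Matrix.mul_assoc _ _ _
  _ = B * (A * C) := by rw [hAB]
  _ = B * A * C := (Matrix.mul_assoc _ _ _).symm
  _ = C * A * C := by rw [hBA]
  _ = C := hC2

/-- Under the contraction condition `‖A Ad - α A²‖ < 1`, the errors
`‖N_k - Ad‖` are monotonically nonincreasing in `k` and converge to `0`. -/
theorem newton_raphson_error_antitone_tendsto_zero {m : ℕ}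
    (A Ad : Matrix (Fin m) (Fin m) ℝ)
    (hA : A.PosSemidef)
    (hMP : IsMoorePenroseInv A Ad)
    (α : ℝ) (N : ℕ → Matrix (Fin m) (Fin m) ℝ)
    (hN0 : N 0 = α • A)
    (hNrec : ∀ k, N (k + 1) = (2 : ℝ) • N k - N k * A * N k)
    (hinit : specNorm (A * Ad - α • (A * A)) < 1) :
    Antitone (fun k => specNorm (N k - Ad)) ∧
      Tendsto (fun k => specNorm (N k - Ad)) atTop (nhds 0) := by
  obtain ⟨h1, h2, h3, h4⟩ := hMP
  have hAt : Aᵀ = A := by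
    have := hA.isHermitian
    simpa [Matrix.IsHermitian, Matrix.conjTranspose_eq_transpose_of_trivial] using this
  -- `Ad` is symmetric, by uniqueness of the Moore-Penrose inverse
  have hAdMP : IsMoorePenroseInv A Adᵀ := by
    refine ⟨?_, ?_, ?_, ?_⟩
    · calc A * Adᵀ * A = Aᵀ * Adᵀ * Aᵀ := by rw [hAt]
      _ = (A * (Ad * A))ᵀ := by rw [transpose_mul, transpose_mul, mul_assoc]
      _ = (A * Ad * A)ᵀ := by rw [mul_assoc]
      _ = Aᵀ := by rw [h1]
      _ = A := hAt
    · calc Adᵀ * A * Adᵀ = Adᵀ * Aᵀ * Adᵀ := by rw [hAt]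
      _ = (Ad * (A * Ad))ᵀ := by rw [transpose_mul, transpose_mul, mul_assoc]
      _ = (Ad * A * Ad)ᵀ := by rw [mul_assoc]
      _ = Adᵀ := by rw [h2]
    · have h : A * Adᵀ = Ad * A := by
        calc A * Adᵀ = Aᵀ * Adᵀ := by rw [hAt]
        _ = (Ad * A)ᵀ := (transpose_mul _ _).symm
        _ = Ad * A := h4
      rw [h, h4]
    · have h : Adᵀ * A = A * Ad := by
        calc Adᵀ * A = Adᵀ * Aᵀ := by rw [hAt]
        _ = (A * Ad)ᵀ := (transpose_mul _ _).symm
        _ = A * Ad := h3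
      rw [h, h3]
  have hAdt : Adᵀ = Ad := mp_unique A Adᵀ Ad hAdMP ⟨h1, h2, h3, h4⟩
  have hP : Ad * A = A * Ad := by
    calc Ad * A = Adᵀ * Aᵀ := by rw [hAdt, hAt]
    _ = (A * Ad)ᵀ := (transpose_mul _ _).symm
    _ = A * Ad := h3
  -- key invariants: `A Ad` acts as identity on `N k` from either side
  have hInv : ∀ k, A * Ad * N k = N k ∧ N k * (A * Ad) = N k := by
    intro k
    induction k with
    | zero =>
      refine ⟨?_, ?_⟩
      · rw [hN0, Matrix.mul_smul, h1]
      · rw [hN0, Matrix.smul_mul]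
        congr 1
        calc A * (A * Ad) = A * (Ad * A) := by rw [hP]
        _ = A * Ad * A := by rw [mul_assoc]
        _ = A := h1
    | succ k ih =>
      obtain ⟨l, r⟩ := ih
      refine ⟨?_, ?_⟩
      · rw [hNrec, mul_sub, Matrix.mul_smul, l]
        congr 1
        calc A * Ad * (N k * A * N k) = (A * Ad * N k) * A * N k := by noncomm_ring
        _ = N k * A * N k := by rw [l]
      · rw [hNrec, sub_mul, Matrix.smul_mul, r]
        congr 1
        calc N k * A * N k * (A * Ad) = N k * A * (N k * (A * Ad)) := by noncomm_ring
        _ = N k * A * N k := by rw [r]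
  -- the residual squares each step
  have hE : ∀ k, A * Ad - A * N (k + 1)
      = (A * Ad - A * N k) * (A * Ad - A * N k) := by
    intro k
    have e1 : (A * Ad) * (A * Ad) = A * Ad := by
      calc (A * Ad) * (A * Ad) = A * (Ad * A * Ad) := by noncomm_ring
      _ = A * Ad := by rw [h2]
    have e2 : (A * Ad) * (A * N k) = A * N k := by
      calc (A * Ad) * (A * N k) = (A * Ad * A) * N k := by noncomm_ring
      _ = A * N k := by rw [h1]
    have e3 : (A * N k) * (A * Ad) = A * N k := by
      calc (A * N k) * (A * Ad) = A * (N k * (A * Ad)) := by noncomm_ring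
      _ = A * N k := by rw [(hInv k).2]
    calc A * Ad - A * N (k + 1)
        = A * Ad - A * ((2 : ℝ) • N k - N k * A * N k) := by rw [hNrec]
    _ = A * Ad - A * (N k + N k - N k * A * N k) := by rw [two_smul]
    _ = A * Ad - A * N k - A * N k + (A * N k) * (A * N k) := by noncomm_ring
    _ = (A * Ad) * (A * Ad) - (A * Ad) * (A * N k) - (A * N k) * (A * Ad)
          + (A * N k) * (A * N k) := by rw [e1, e2, e3]
    _ = (A * Ad - A * N k) * (A * Ad - A * N k) := by noncomm_ring
  -- the error is `Ad` times the residual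
  have hAdE : ∀ k, Ad * (A * Ad - A * N k) = Ad - N k := by
    intro k
    calc Ad * (A * Ad - A * N k) = Ad * A * Ad - (Ad * A) * N k := by noncomm_ring
    _ = Ad - (A * Ad) * N k := by rw [h2, hP]
    _ = Ad - N k := by rw [(hInv k).1]
  have hNAd : ∀ k, N k - Ad = -(Ad * (A * Ad - A * N k)) := by
    intro k
    rw [hAdE k, neg_sub]
  set c : ℝ := specNorm (A * Ad - A * N 0) with hc
  have hc0 : 0 ≤ c := specNorm_nonneg _
  have hc1 : c < 1 := by
    have : A * N 0 = α • (A * A) := by rw [hN0, Matrix.mul_smul]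
    rw [hc, this]
    exact hinit
  -- residual norms stay below `c`
  have hEle : ∀ k, specNorm (A * Ad - A * N k) ≤ c := by
    intro k
    induction k with
    | zero => exact le_of_eq rfl
    | succ k ih =>
      calc specNorm (A * Ad - A * N (k + 1))
          = specNorm ((A * Ad - A * N k) * (A * Ad - A * N k)) := by rw [hE]
      _ ≤ specNorm (A * Ad - A * N k) * specNorm (A * Ad - A * N k) :=
          specNorm_mul_le _ _
      _ ≤ c * c := mul_le_mul ih ih (specNorm_nonneg _) hc0
      _ ≤ c := mul_le_of_le_one_left hc0 hc1.le
  have ha : ∀ k, specNorm (N k - Ad) = specNorm (Ad * (A * Ad - A * N k)) := by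
    intro k
    rw [hNAd k, specNorm_neg]
  have hstep : ∀ k, specNorm (N (k + 1) - Ad) ≤ c * specNorm (N k - Ad) := by
    intro k
    calc specNorm (N (k + 1) - Ad)
        = specNorm (Ad * (A * Ad - A * N (k + 1))) := ha _
    _ = specNorm ((Ad * (A * Ad - A * N k)) * (A * Ad - A * N k)) := by
        rw [hE, mul_assoc]
    _ ≤ specNorm (Ad * (A * Ad - A * N k)) * specNorm (A * Ad - A * N k) :=
        specNorm_mul_le _ _
    _ ≤ specNorm (Ad * (A * Ad - A * N k)) * c :=
        mul_le_mul_of_nonneg_left (hEle k) (specNorm_nonneg _)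
    _ = c * specNorm (N k - Ad) := by rw [ha k, mul_comm]
  have hantit : Antitone (fun k => specNorm (N k - Ad)) := by
    apply antitone_nat_of_succ_le
    intro k
    calc specNorm (N (k + 1) - Ad) ≤ c * specNorm (N k - Ad) := hstep k
    _ ≤ 1 * specNorm (N k - Ad) :=
        mul_le_mul_of_nonneg_right hc1.le (specNorm_nonneg _)
    _ = specNorm (N k - Ad) := one_mul _
  refine ⟨hantit, ?_⟩
  have hbound : ∀ k, specNorm (N k - Ad) ≤ specNorm (N 0 - Ad) * c ^ k := by
    intro k
    induction k with
    | zero => simp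
    | succ k ih =>
      calc specNorm (N (k + 1) - Ad) ≤ c * specNorm (N k - Ad) := hstep k
      _ ≤ c * (specNorm (N 0 - Ad) * c ^ k) :=
          mul_le_mul_of_nonneg_left ih hc0
      _ = specNorm (N 0 - Ad) * c ^ (k + 1) := by ring
  have hlim : Tendsto (fun k => specNorm (N 0 - Ad) * c ^ k) atTop (nhds 0) := by
    have := (tendsto_pow_atTop_nhds_zero_of_lt_one hc0 hc1).const_mul
      (specNorm (N 0 - Ad))
    simpa using this
  exact squeeze_zero (fun k => specNorm_nonneg _) hbound hlim
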